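/- With A analytic represented by a tree T and the rank δ defined as the least α with A_x = (A_α)_x: the set Δ = {(x,f) : f ∈ WO and δ(x) ≤ ot(f)} is Π¹₂, and the set {x : A_x is Borel} is Σ¹₃. -/

import Mathlib

open MeasureTheory

/-- The "extension" relation of a tree `T ⊆ ω^{<ω}`: `s` is a proper extension
of `t` and `s ∈ T`.  `T` is well-founded (has no infinite branch) iff this
relation is well-founded. -/
def branchRel (T : Set (List ℕ)) : List ℕ → List ℕ → Prop :=
  fun s t => t <+: s ∧ s ≠ t ∧ s ∈ T

/-- `T` is a well-founded tree (`T ∈ WF`). -/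
def TreeWF (T : Set (List ℕ)) : Prop := WellFounded (branchRel T)

/-- The ordinal rank of a well-founded tree, computed at the empty sequence. -/
noncomputable def treeRank (T : Set (List ℕ)) (h : TreeWF T) : Ordinal :=
  (h.apply []).rank

/-- `T ∈ WF_α`: `T` is well-founded of rank at most `α`. -/
def TreeRankLE (T : Set (List ℕ)) (α : Ordinal) : Prop :=
  ∃ h : TreeWF T, treeRank T h ≤ α

/-- The section tree `T_{xy} = {s : (x↾|s|, y↾|s|, s) ∈ T}` of a tree `T` on
`ω × ω × ω`. -/
def secTree (T : Set (List (ℕ × ℕ × ℕ))) (x y : ℕ → ℕ) : Set (List ℕ) :=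
  {s | (List.ofFn fun i : Fin s.length => (x i.1, y i.1, s.get i)) ∈ T}

/-- The `α`-th approximation `A_α = {(x,y) : T_{xy} ∉ WF_α}` to the analytic set
represented by `T`. -/
def Aapprox (T : Set (List (ℕ × ℕ × ℕ))) (α : Ordinal) : Set ((ℕ → ℕ) × (ℕ → ℕ)) :=
  {p | ¬ TreeRankLE (secTree T p.1 p.2) α}


/-- Boldface Π¹₁: complements of analytic sets. -/
def IsPi11 {X : Type*} [TopologicalSpace X] (A : Set X) : Prop :=
  AnalyticSet Aᶜ

/-- Boldface Σ¹₂: projections of Π¹₁ subsets of `X × ω^ω`. -/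
def IsSigma12 {X : Type*} [TopologicalSpace X] (A : Set X) : Prop :=
  ∃ C : Set (X × (ℕ → ℕ)), IsPi11 C ∧ A = Prod.fst '' C

/-- Boldface Π¹₂: complements of Σ¹₂ sets. -/
def IsPi12 {X : Type*} [TopologicalSpace X] (A : Set X) : Prop :=
  IsSigma12 Aᶜ

/-- Boldface Σ¹₃: projections of Π¹₂ subsets of `X × ω^ω`. -/
def IsSigma13 {X : Type*} [TopologicalSpace X] (A : Set X) : Prop :=
  ∃ C : Set (X × (ℕ → ℕ)), IsPi12 C ∧ A = Prod.fst '' C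

/-- The binary relation on `ω` coded by `f : ω → ω`. -/
def relOf (f : ℕ → ℕ) : ℕ → ℕ → Prop := fun m n => f (Nat.pair m n) = 1

/-- `f ∈ WO`: `f` codes a well-order of `ω`. -/
def WOcode (f : ℕ → ℕ) : Prop := IsWellOrder ℕ (relOf f)

open Classical in
/-- The order type `ot(f)` of the well-order coded by `f` (junk value `0` if `f`
is not a code of a well-order). -/
noncomputable def otf (f : ℕ → ℕ) : Ordinal :=
  if h : IsWellOrder ℕ (relOf f) then @Ordinal.type ℕ (relOf f) h else 0

/-- The set `Δ = {(x,f) : f ∈ WO ∧ δ(x) ≤ ot(f)}`; since the approximations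
`A_α` are decreasing in `α`, `δ(x) ≤ ot(f)` iff `A_x = (A_{ot(f)})_x`. -/
def DeltaSet (A : Set ((ℕ → ℕ) × (ℕ → ℕ))) (T : Set (List (ℕ × ℕ × ℕ))) :
    Set ((ℕ → ℕ) × (ℕ → ℕ)) :=
  {p | WOcode p.2 ∧ {y | (p.1, y) ∈ A} = {y | (p.1, y) ∈ Aapprox T (otf p.2)}}

namespace DST5
open Set

universe u
variable {α : Type u}

theorem rank_proof_irrel {r : α → α → Prop} {a : α} (h h' : Acc r a) : h.rank = h'.rank :=
  congrArg Acc.rank (Subsingleton.elim h h')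

/-- rank-at-most predicate for accessible points -/
def accRankLE (r : α → α → Prop) (a : α) (o : Ordinal.{u}) : Prop :=
  ∃ h : Acc r a, h.rank ≤ o

theorem accRankLE_iff {r : α → α → Prop} {a : α} {o : Ordinal.{u}} :
    accRankLE r a o ↔ ∀ b, r b a → ∃ o' < o, accRankLE r b o' := by
  constructor
  · rintro ⟨h, hle⟩ b hb
    exact ⟨(h.inv hb).rank, lt_of_lt_of_le (Acc.rank_lt_of_rel h hb) hle, h.inv hb, le_rfl⟩
  · intro H
    have ha : Acc r a := Acc.intro a fun b hb => ((H b hb).choose_spec.2).choose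
    refine ⟨ha, ?_⟩
    rw [ha.rank_eq]
    apply Ordinal.iSup_le
    rintro ⟨b, hb⟩
    obtain ⟨o', ho', h', hle⟩ := H b hb
    rw [Order.succ_le_iff, rank_proof_irrel (ha.inv hb) h']
    exact lt_of_le_of_lt hle ho'

theorem treeWF_iff_acc_nil (U : Set (List ℕ)) : TreeWF U ↔ Acc (branchRel U) [] := by
  constructor
  · exact fun h => h.apply []
  · intro h
    constructor
    intro s
    constructor
    intro t ht
    refine h.inv ?_
    refine ⟨List.nil_prefix, ?_, ht.2.2⟩
    rintro rfl
    exact ht.2.1 (List.prefix_nil.mp ht.1).symm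

theorem treeRankLE_iff (U : Set (List ℕ)) (o : Ordinal) :
    TreeRankLE U o ↔ accRankLE (branchRel U) [] o := by
  constructor
  · rintro ⟨h, hr⟩; exact ⟨h.apply [], hr⟩
  · rintro ⟨h, hr⟩
    have hWF : TreeWF U := (treeWF_iff_acc_nil U).2 h
    exact ⟨hWF, le_trans (le_of_eq (rank_proof_irrel _ _)) hr⟩

theorem treeRankLE_treeWF {U : Set (List ℕ)} {o : Ordinal} (h : TreeRankLE U o) : TreeWF U :=
  h.choose


instance branchRel_irrefl (U : Set (List ℕ)) : IsIrrefl (List ℕ) (branchRel U) :=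
  ⟨fun _ h => h.2.1 rfl⟩

instance branchRel_trans_inst (U : Set (List ℕ)) : IsTrans (List ℕ) (branchRel U) := by
  constructor
  intro a b c hab hbc
  refine ⟨hbc.1.trans hab.1, ?_, hab.2.2⟩
  have h1 : b.length < a.length := by
    rcases lt_or_eq_of_le hab.1.length_le with h | h
    · exact h
    · exact absurd (hab.1.eq_of_length h).symm hab.2.1
  have h2 : c.length ≤ b.length := hbc.1.length_le
  intro h
  rw [h] at h1
  omega

instance branchRel_strictOrder (U : Set (List ℕ)) : IsStrictOrder (List ℕ) (branchRel U) := {}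

theorem accRankLE_of_measure {r : α → α → Prop} (S : Set α) (ρ : α → Ordinal.{u})
    (H : ∀ a ∈ S, ∀ b, r b a → b ∈ S ∧ ρ b < ρ a) :
    ∀ a ∈ S, accRankLE r a (ρ a) := by
  have main : ∀ o : Ordinal, ∀ a ∈ S, ρ a = o → accRankLE r a o := by
    intro o
    induction o using Ordinal.induction with
    | h o IH =>
      intro a ha h
      subst h
      rw [accRankLE_iff]
      intro b hb
      obtain ⟨hbS, hblt⟩ := H a ha b hb
      exact ⟨ρ b, hblt, IH (ρ b) hblt b hbS rfl⟩
  exact fun a ha => main (ρ a) a ha rfl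

theorem otf_eq {f : ℕ → ℕ} (wo : WOcode f) : otf f = @Ordinal.type ℕ (relOf f) wo := by
  rw [otf]
  exact dif_pos wo

theorem treeRankLE_otf_iff {f : ℕ → ℕ} (wo : WOcode f) (U : Set (List ℕ)) :
    TreeRankLE U (otf f) ↔
      ∃ ρ : List ℕ → ℕ, ∀ s t, branchRel U s t → t ∈ U → t ≠ [] →
        relOf f (ρ s) (ρ t) := by
  haveI : IsWellOrder ℕ (relOf f) := wo
  have hot : otf f = Ordinal.type (relOf f) := otf_eq wo
  constructor
  · rintro ⟨hWF, hrank⟩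
    have hr : ∀ s, s ∈ U → s ≠ [] → (hWF.apply s).rank < Ordinal.type (relOf f) := by
      intro s hs hne
      have hb : branchRel U s [] := ⟨List.nil_prefix, hne, hs⟩
      calc (hWF.apply s).rank = ((hWF.apply []).inv hb).rank := rank_proof_irrel _ _
        _ < (hWF.apply []).rank := Acc.rank_lt_of_rel _ hb
        _ ≤ otf f := hrank
        _ = _ := hot
    classical
    refine ⟨fun s => if h : s ∈ U ∧ s ≠ [] then
        (Ordinal.typein_surj (relOf f) (hr s h.1 h.2)).choose else 0, ?_⟩
    intro s t hst htU htne
    dsimp only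
    have hsU : s ∈ U := hst.2.2
    have hsne : s ≠ [] := by
      rintro rfl
      exact htne (List.prefix_nil.mp hst.1)
    rw [dif_pos ⟨hsU, hsne⟩, dif_pos ⟨htU, htne⟩]
    have e1 := (Ordinal.typein_surj (relOf f) (hr s hsU hsne)).choose_spec
    have e2 := (Ordinal.typein_surj (relOf f) (hr t htU htne)).choose_spec
    have hlt : (hWF.apply s).rank < (hWF.apply t).rank := by
      calc (hWF.apply s).rank = ((hWF.apply t).inv hst).rank := rank_proof_irrel _ _
        _ < (hWF.apply t).rank := Acc.rank_lt_of_rel _ hst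
    rw [← Ordinal.typein_lt_typein (relOf f), e1, e2]
    exact hlt
  · rintro ⟨ρ, hρ⟩
    have key : ∀ s ∈ {s : List ℕ | s ∈ U ∧ s ≠ []},
        accRankLE (branchRel U) s (Ordinal.typein (relOf f) (ρ s)) := by
      apply accRankLE_of_measure
      intro a ha b hb
      refine ⟨⟨hb.2.2, ?_⟩, ?_⟩
      · rintro rfl
        exact ha.2 (List.prefix_nil.mp hb.1)
      · exact (Ordinal.typein_lt_typein (relOf f)).2 (hρ b a hb ha.1 ha.2)
    rw [treeRankLE_iff, accRankLE_iff]
    intro t ht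
    exact ⟨Ordinal.typein (relOf f) (ρ t), hot ▸ Ordinal.typein_lt_type (relOf f) (ρ t),
      key t ⟨ht.2.2, ht.2.1⟩⟩

theorem ofFn_prefix_ofFn (u : ℕ → ℕ) {a b : ℕ} (hab : a ≤ b) :
    (List.ofFn fun i : Fin a => u i) <+: (List.ofFn fun i : Fin b => u i) := by
  induction b, hab using Nat.le_induction with
  | base => exact List.prefix_rfl
  | succ b hb IH =>
    refine IH.trans ?_
    rw [List.ofFn_succ']
    have h : (fun i : Fin b => u ((Fin.castSucc i) : ℕ)) = fun i : Fin b => u i := by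
      funext i; simp
    rw [List.concat_eq_append, h]
    exact List.prefix_append _ _

theorem ofFn_eq_ofFn_iff (u v : ℕ → ℕ) (n : ℕ) :
    (List.ofFn fun i : Fin n => u i) = (List.ofFn fun i : Fin n => v i) ↔ ∀ i < n, u i = v i := by
  rw [List.ofFn_inj]
  constructor
  · intro h i hi; exact congrFun h ⟨i, hi⟩
  · intro h; funext i; exact h i i.2

theorem chain_mono (c : ℕ → List ℕ) (hc : ∀ n, c n <+: c (n + 1)) :
    ∀ a b : ℕ, a ≤ b → c a <+: c b := by
  intro a b hab
  induction hab with
  | refl => exact List.prefix_rfl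
  | step h ih => exact ih.trans (hc _)

theorem chain_len (c : ℕ → List ℕ) (hc : ∀ n, c n <+: c (n + 1) ∧ c n ≠ c (n + 1)) :
    ∀ n, (c n).length < (c (n + 1)).length := by
  intro n
  rcases lt_or_eq_of_le (hc n).1.length_le with h | h
  · exact h
  · exact absurd ((hc n).1.eq_of_length h) (hc n).2

theorem chain_limit_entry (c : ℕ → List ℕ) (hc : ∀ n, c n <+: c (n + 1) ∧ c n ≠ c (n + 1)) :
    ∀ n i (h : i < (c n).length), (c (i + 1)).getD i 0 = (c n)[i] := by
  have mono := chain_mono c (fun n => (hc n).1)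
  have hlt := chain_len c hc
  have hge : ∀ n, n ≤ (c n).length := by
    intro n
    induction n with
    | zero => exact Nat.zero_le _
    | succ n ih => exact Nat.lt_of_le_of_lt ih (hlt n)
  intro n i h2
  have hi1 : i < (c (i + 1)).length := Nat.lt_of_lt_of_le (Nat.lt_succ_self i) (hge (i + 1))
  rw [List.getD_eq_getElem _ _ hi1]
  rcases le_total n (i + 1) with h | h
  · exact ((mono _ _ h).getElem h2).symm
  · exact (mono _ _ h).getElem hi1

theorem chain_limit (c : ℕ → List ℕ) (hc : ∀ n, c n <+: c (n + 1) ∧ c n ≠ c (n + 1)) :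
    ∀ n, (List.ofFn fun i : Fin (c n).length => (c ((i : ℕ) + 1)).getD i 0) = c n := by
  intro n
  apply List.ext_getElem
  · simp
  · intro i h1 h2
    simp only [List.getElem_ofFn]
    exact chain_limit_entry c hc n i h2

def BranchCode (U : Set (List ℕ)) (v : ℕ → ℕ) : Prop :=
  (∀ n, v (2 * n + 1) < v (2 * (n + 1) + 1)) ∧
    ∀ n, (List.ofFn fun i : Fin (v (2 * n + 1)) => v (2 * (i : ℕ))) ∈ U

theorem not_treeWF_iff_branchCode (U : Set (List ℕ)) :
    ¬ TreeWF U ↔ ∃ v : ℕ → ℕ, BranchCode U v := by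
  constructor
  · intro h
    rw [TreeWF, RelEmbedding.wellFounded_iff_isEmpty, not_isEmpty_iff] at h
    obtain ⟨g⟩ := h
    have hg : ∀ n, branchRel U (g (n + 1)) (g n) := fun n => g.map_rel_iff.2 (Nat.lt_succ_self n)
    set c : ℕ → List ℕ := fun n => g (n + 1) with hcdef
    have hchain : ∀ n, c n <+: c (n + 1) ∧ c n ≠ c (n + 1) := fun n =>
      ⟨(hg (n + 1)).1, fun h => (hg (n + 1)).2.1 h.symm⟩
    have hmem : ∀ n, c n ∈ U := fun n => (hg n).2.2
    have hlt := chain_len c hchain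
    classical
    set v : ℕ → ℕ := fun m => if m % 2 = 0 then (c (m / 2 + 1)).getD (m / 2) 0
      else (c (m / 2)).length with hvdef
    have hvodd : ∀ n, v (2 * n + 1) = (c n).length := by
      intro n
      have e1 : ¬((2 * n + 1) % 2 = 0) := by omega
      have e3 : (2 * n + 1) / 2 = n := by omega
      simp only [hvdef]
      rw [if_neg e1, e3]
    have hveven : ∀ i, v (2 * i) = (c (i + 1)).getD i 0 := by
      intro i
      have p1 : (2 * i) % 2 = 0 := by omega
      have p2 : 2 * i / 2 = i := by omega
      simp only [hvdef]
      rw [if_pos p1, p2]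
    refine ⟨v, ?_, ?_⟩
    · intro n
      rw [hvodd n, hvodd (n + 1)]
      exact hlt n
    · intro n
      have hl : (List.ofFn fun i : Fin (v (2 * n + 1)) => v (2 * (i : ℕ))) = c n := by
        apply List.ext_getElem
        · simp [hvodd n]
        · intro i h1 h2
          rw [List.getElem_ofFn]
          simp only []
          rw [hveven]
          exact chain_limit_entry c hchain n i h2
      rw [hl]
      exact hmem n
  · rintro ⟨v, hv1, hv2⟩
    set c : ℕ → List ℕ := fun n => List.ofFn fun i : Fin (v (2 * n + 1)) => v (2 * (i : ℕ))
      with hcdef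
    have hdesc : ∀ n, branchRel U (c (n + 1)) (c n) := by
      intro n
      refine ⟨ofFn_prefix_ofFn (fun m => v (2 * m)) (le_of_lt (hv1 n)), ?_, hv2 (n + 1)⟩
      intro h
      have := congrArg List.length h
      simp only [hcdef, List.length_ofFn] at this
      exact absurd this (by have := hv1 n; omega)
    exact fun hWF => RelEmbedding.not_wellFounded
      (RelEmbedding.natGT c hdesc) hWF




instance polish2 : PolishSpace ((ℕ → ℕ) × (ℕ → ℕ)) := inferInstance
instance polish3 : PolishSpace (((ℕ → ℕ) × (ℕ → ℕ)) × (ℕ → ℕ)) := by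
  haveI : TopologicalSpace.SeparableSpace (((ℕ → ℕ) × (ℕ → ℕ)) × (ℕ → ℕ)) := inferInstance
  infer_instance
instance polish4 : PolishSpace ((((ℕ → ℕ) × (ℕ → ℕ)) × (ℕ → ℕ)) × (ℕ → ℕ)) := by
  haveI : TopologicalSpace.SeparableSpace ((((ℕ → ℕ) × (ℕ → ℕ)) × (ℕ → ℕ)) × (ℕ → ℕ)) := inferInstance
  infer_instance

-- discrete-topology checks
example : DiscreteTopology ℕ := inferInstance
example : DiscreteTopology (ℕ × ℕ × ℕ) := inferInstance
example : PolishSpace (((ℕ → ℕ) × (ℕ → ℕ)) × (ℕ → ℕ)) := inferInstance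
example : PolishSpace ((((ℕ → ℕ) × (ℕ → ℕ)) × (ℕ → ℕ)) × (ℕ → ℕ)) := inferInstance
example : BorelSpace (ℕ → ℕ) := inferInstance
example : BorelSpace ((ℕ → ℕ) × (ℕ → ℕ)) := inferInstance
example : T2Space ((ℕ → ℕ) × (ℕ → ℕ)) := inferInstance

/-- continuity of the evaluation map on Baire space -/
theorem continuous_eval2 : Continuous fun p : (ℕ → ℕ) × ℕ => p.1 p.2 := by
  rw [continuous_def]
  intro s _
  have : (fun p : (ℕ → ℕ) × ℕ => p.1 p.2) ⁻¹' s = ⋃ k : ℕ, ⋃ n ∈ s, {f : ℕ → ℕ | f k = n} ×ˢ {k} := by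
    ext p
    simp only [mem_preimage, mem_iUnion, mem_prod, mem_setOf_eq, mem_singleton_iff]
    constructor
    · intro h; exact ⟨p.2, p.1 p.2, h, rfl, rfl⟩
    · rintro ⟨k, n, hn, h1, h2⟩
      have : p.1 p.2 = n := by rw [h2, h1]
      rw [this]; exact hn
  rw [this]
  refine isOpen_iUnion fun k => isOpen_iUnion fun n => isOpen_iUnion fun _ => ?_
  have h1 : IsOpen {f : ℕ → ℕ | f k = n} := by
    have : {f : ℕ → ℕ | f k = n} = (fun f : ℕ → ℕ => f k) ⁻¹' {n} := rfl
    rw [this]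
    exact (isOpen_discrete _).preimage (continuous_apply k)
  exact h1.prod (isOpen_discrete _)

/-- locally-constant membership sets are clopen -/
theorem isClopen_mem_of_locallyConstant {W : Type*} [TopologicalSpace W] {β : Type*}
    (L : W → β) (hL : ∀ b : β, IsOpen {w | L w = b}) (S : Set β) :
    IsClopen {w | L w ∈ S} := by
  constructor
  · rw [← isOpen_compl_iff]
    have : {w | L w ∈ S}ᶜ = ⋃ b ∈ Sᶜ, {w | L w = b} := by
      ext w
      simp only [mem_compl_iff, mem_setOf_eq, mem_iUnion]
      constructor
      · intro h; exact ⟨L w, h, rfl⟩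
      · rintro ⟨b, hb, rfl⟩; exact hb
    rw [this]
    exact isOpen_biUnion fun b _ => hL b
  · have : {w | L w ∈ S} = ⋃ b ∈ S, {w | L w = b} := by
      ext w
      simp only [mem_setOf_eq, mem_iUnion]
      constructor
      · intro h; exact ⟨L w, h, rfl⟩
      · rintro ⟨b, hb, rfl⟩; exact hb
    rw [this]
    exact isOpen_biUnion fun b _ => hL b

/-- extraction of a modulus of continuity at a point of Baire space -/
theorem modulus {g : (ℕ → ℕ) → (ℕ → ℕ)} (hg : Continuous g) (u : ℕ → ℕ) (n : ℕ) :
    ∃ k : ℕ, ∀ u' : ℕ → ℕ, (∀ i < k, u' i = u i) → ∀ j < n, g u' j = g u j := by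
  have hO : IsOpen {u' | ∀ j < n, g u' j = g u j} := by
    have : {u' | ∀ j < n, g u' j = g u j} = ⋂ j ∈ Finset.range n, {u' | g u' j = g u j} := by
      ext u'; simp
    rw [this]
    refine isOpen_biInter_finset fun j _ => ?_
    have : {u' | g u' j = g u j} = (fun u' => g u' j) ⁻¹' {g u j} := rfl
    rw [this]
    exact (isOpen_discrete _).preimage ((continuous_apply j).comp hg)
  have hu : u ∈ {u' | ∀ j < n, g u' j = g u j} := fun j _ => rfl
  obtain ⟨I, t, hIt, hsub⟩ := isOpen_pi_iff.1 hO u hu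
  classical
  refine ⟨(I.sup id) + 1, fun u' hu' => ?_⟩
  apply hsub
  intro a ha
  have : u' a = u a := hu' a (Nat.lt_succ_of_le (Finset.le_sup (f := id) ha))
  rw [this]
  exact (hIt a ha).2

/-- every analytic set is the projection of a closed subset of `X × ℕ^ℕ` -/
theorem analytic_eq_proj_closed {X : Type*} [TopologicalSpace X] [T2Space X] {S : Set X}
    (hS : AnalyticSet S) :
    ∃ F : Set (X × (ℕ → ℕ)), IsClosed F ∧ S = Prod.fst '' F := by
  rw [AnalyticSet] at hS
  rcases hS with h | ⟨g, hg, hrange⟩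
  · exact ⟨∅, isClosed_empty, by simp [h]⟩
  · refine ⟨{q | q.1 = g q.2}, isClosed_eq continuous_fst (hg.comp continuous_snd), ?_⟩
    ext p
    simp only [← hrange, mem_range, mem_image, mem_setOf_eq]
    constructor
    · rintro ⟨u, rfl⟩; exact ⟨(g u, u), rfl, rfl⟩
    · rintro ⟨⟨a, u⟩, h1, rfl⟩; exact ⟨u, h1.symm⟩

theorem AnalyticSet.union' {X : Type*} [TopologicalSpace X] {s t : Set X}
    (hs : AnalyticSet s) (ht : AnalyticSet t) : AnalyticSet (s ∪ t) := by
  rw [Set.union_eq_iUnion]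
  exact AnalyticSet.iUnion (fun b => by cases b <;> simpa)

theorem AnalyticSet.inter' {X : Type*} [TopologicalSpace X] [T2Space X] {s t : Set X}
    (hs : AnalyticSet s) (ht : AnalyticSet t) : AnalyticSet (s ∩ t) := by
  rw [Set.inter_eq_iInter]
  exact AnalyticSet.iInter (fun b => by cases b <;> simpa)

/-- projection of a closed set is analytic -/
theorem proj_closed_analytic {X Y : Type*} [TopologicalSpace X] [TopologicalSpace Y]
    [PolishSpace X] [PolishSpace Y] {F : Set (X × Y)} (hF : IsClosed F) :
    AnalyticSet (Prod.fst '' F) :=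
  hF.analyticSet.image_of_continuous continuous_fst



/-! ### Phase C : measurability of rank sections, cardinal arithmetic -/

theorem countable_Iio_of_card {β : Ordinal} (hβ : β.card ≤ Cardinal.aleph0) :
    Countable (Set.Iio β) := by
  rw [← Cardinal.mk_le_aleph0_iff, Ordinal.mk_Iio_ordinal]
  calc Cardinal.lift β.card ≤ Cardinal.lift Cardinal.aleph0 := Cardinal.lift_le.2 hβ
  _ = Cardinal.aleph0 := Cardinal.lift_aleph0

theorem secTree_mem_congr {T : Set (List (ℕ × ℕ × ℕ))} {x y y' : ℕ → ℕ} {t : List ℕ}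
    (h : ∀ i < t.length, y i = y' i) : t ∈ secTree T x y ↔ t ∈ secTree T x y' := by
  unfold secTree
  simp only [mem_setOf_eq]
  have he : (List.ofFn fun i : Fin t.length => (x i.1, y i.1, t.get i)) =
      (List.ofFn fun i : Fin t.length => (x i.1, y' i.1, t.get i)) := by
    apply congrArg
    funext i
    rw [h i i.2]
  rw [he]

theorem measurable_secMem (T : Set (List (ℕ × ℕ × ℕ))) (x : ℕ → ℕ) (t : List ℕ) :
    MeasurableSet {y : ℕ → ℕ | t ∈ secTree T x y} := by
  classical
  have hset : {y : ℕ → ℕ | t ∈ secTree T x y} =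
      ⋃ (σ : Fin t.length → ℕ)
        (_ : t ∈ secTree T x (fun m => if h : m < t.length then σ ⟨m, h⟩ else 0)),
        ⋂ i : Fin t.length, {y : ℕ → ℕ | y i.1 = σ i} := by
    ext y
    simp only [mem_setOf_eq, mem_iUnion, mem_iInter]
    constructor
    · intro hy
      refine ⟨fun i => y i.1, ?_, fun i => rfl⟩
      rw [← secTree_mem_congr (y := y)]
      · exact hy
      · intro i hi
        rw [dif_pos hi]
    · rintro ⟨σ, hσ, hy⟩
      rw [secTree_mem_congr (y' := fun m => if h : m < t.length then σ ⟨m, h⟩ else 0)]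
      · exact hσ
      · intro i hi
        rw [dif_pos hi]
        exact hy ⟨i, hi⟩
  rw [hset]
  refine MeasurableSet.iUnion fun σ => MeasurableSet.iUnion fun _ =>
    MeasurableSet.iInter fun i => ?_
  have he : {y : ℕ → ℕ | y i.1 = σ i} = (fun y : ℕ → ℕ => y i.1) ⁻¹' {σ i} := rfl
  rw [he]
  exact (measurable_pi_apply i.1) (measurableSet_singleton (σ i))

theorem measurable_accRankLE (T : Set (List (ℕ × ℕ × ℕ))) (x : ℕ → ℕ) :
    ∀ β : Ordinal, β.card ≤ Cardinal.aleph0 → ∀ s : List ℕ,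
      MeasurableSet {y : ℕ → ℕ | accRankLE (branchRel (secTree T x y)) s β} := by
  intro β
  induction β using Ordinal.induction with
  | h β IH =>
    intro hβ s
    have hset : {y : ℕ → ℕ | accRankLE (branchRel (secTree T x y)) s β} =
        ⋂ t : List ℕ, {y : ℕ → ℕ | s <+: t ∧ t ≠ s ∧ t ∈ secTree T x y}ᶜ ∪
          ⋃ γ : Set.Iio β, {y : ℕ → ℕ | accRankLE (branchRel (secTree T x y)) t γ.1} := by
      ext y
      simp only [mem_setOf_eq, mem_iInter, mem_union, mem_iUnion, mem_compl_iff]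
      rw [accRankLE_iff]
      constructor
      · intro H t
        by_cases hbt : branchRel (secTree T x y) t s
        · obtain ⟨o', ho', h'⟩ := H t hbt
          exact Or.inr ⟨⟨o', ho'⟩, h'⟩
        · exact Or.inl hbt
      · intro H t hbt
        rcases H t with h | ⟨⟨γ, hγ⟩, h⟩
        · exact absurd hbt h
        · exact ⟨γ, hγ, h⟩
    rw [hset]
    haveI : Countable (Set.Iio β) := countable_Iio_of_card hβ
    refine MeasurableSet.iInter fun t => MeasurableSet.union ?_ ?_
    · apply MeasurableSet.compl
      by_cases hc : s <+: t ∧ t ≠ s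
      · have he : {y : ℕ → ℕ | s <+: t ∧ t ≠ s ∧ t ∈ secTree T x y}
            = {y | t ∈ secTree T x y} := by
          ext y; simp [hc.1, hc.2]
        rw [he]
        exact measurable_secMem T x t
      · have he : {y : ℕ → ℕ | s <+: t ∧ t ≠ s ∧ t ∈ secTree T x y} = ∅ := by
          ext y
          simp only [mem_setOf_eq, mem_empty_iff_false, iff_false]
          intro h
          exact hc ⟨h.1, h.2.1⟩
        rw [he]
        exact MeasurableSet.empty
    · exact MeasurableSet.iUnion fun γ =>
        IH γ.1 γ.2 (le_trans (Ordinal.card_le_card (le_of_lt γ.2)) hβ) t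

theorem rank_lt_omega1 {P : Type} [Countable P] {q : P → P → Prop} (wq : WellFounded q) :
    ∀ p, (wq.apply p).rank < (Cardinal.aleph 1).ord := by
  intro p
  induction p using wq.induction with
  | _ p IH =>
    rw [(wq.apply p).rank_eq]
    apply Ordinal.iSup_lt_ord_lift
    · rw [Cardinal.isRegular_aleph_one.cof_eq, Cardinal.lift_id]
      exact lt_of_le_of_lt Cardinal.mk_le_aleph0 Cardinal.aleph0_lt_aleph_one
    · rintro ⟨b, hb⟩
      have hlim : Order.IsSuccLimit ((Cardinal.aleph 1).ord) :=
        Cardinal.isSuccLimit_ord (le_of_lt Cardinal.aleph0_lt_aleph_one)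
      have := IH b hb
      rw [rank_proof_irrel ((wq.apply p).inv hb) (wq.apply b)]
      exact hlim.succ_lt this

theorem exists_WOcode_ge {α : Ordinal} (hα : α.card ≤ Cardinal.aleph0) :
    ∃ f : ℕ → ℕ, WOcode f ∧ α ≤ otf f := by
  classical
  set β := α + Ordinal.omega0 with hβ
  have hcard : β.card = Cardinal.aleph0 := by
    rw [hβ, Ordinal.card_add, Ordinal.card_omega0]
    exact Cardinal.add_eq_right le_rfl hα
  have hne : Nonempty (ℕ ≃ β.ToType) := by
    rw [← Cardinal.eq, Cardinal.mk_toType, hcard, Cardinal.mk_nat]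
  obtain ⟨e⟩ := hne
  set f : ℕ → ℕ := fun m => if e (Nat.unpair m).1 < e (Nat.unpair m).2 then 1 else 0 with hf
  have hrel : ∀ a b : ℕ, relOf f a b ↔ e a < e b := by
    intro a b
    show f (Nat.pair a b) = 1 ↔ _
    simp only [hf, Nat.unpair_pair]
    by_cases h : e a < e b <;> simp [h]
  haveI : IsWellOrder β.ToType (· < ·) := isWellOrder_lt
  have emb : (relOf f) ↪r ((· < ·) : β.ToType → β.ToType → Prop) :=
    ⟨e.toEmbedding, by intro a b; exact (hrel a b).symm⟩
  haveI hwo : IsWellOrder ℕ (relOf f) := emb.isWellOrder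
  refine ⟨f, hwo, ?_⟩
  have hot : otf f = β := by
    rw [otf_eq hwo]
    have iso : (relOf f) ≃r ((· < ·) : β.ToType → β.ToType → Prop) :=
      ⟨e, by intro a b; exact (hrel a b).symm⟩
    rw [Ordinal.type_eq.2 ⟨iso⟩]
    exact Ordinal.type_toType β
  rw [hot]
  exact le_self_add

/-! ### Phase D : boundedness -/

theorem card_le_aleph0_of_lt_omega1 {o : Ordinal} (h : o < (Cardinal.aleph 1).ord) :
    o.card ≤ Cardinal.aleph0 := by
  rw [Cardinal.lt_ord] at h
  rw [← Cardinal.succ_aleph0] at h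
  exact Order.lt_succ_iff.1 h

theorem bounded_rank (T : Set (List (ℕ × ℕ × ℕ))) (x : ℕ → ℕ)
    (hD : AnalyticSet {y : ℕ → ℕ | TreeWF (secTree T x y)}) :
    ∃ α : Ordinal, α.card ≤ Cardinal.aleph0 ∧
      ∀ (y : ℕ → ℕ) (h : TreeWF (secTree T x y)), treeRank _ h ≤ α := by
  rw [AnalyticSet] at hD
  rcases hD with hD | ⟨g, hg, hrange⟩
  · exact ⟨0, by simp, fun y h =>
      absurd h (Set.eq_empty_iff_forall_notMem.mp hD y)⟩
  set q : (List ℕ × List ℕ) → (List ℕ × List ℕ) → Prop := fun b a =>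
    a.1 <+: b.1 ∧ a.1 ≠ b.1 ∧ a.2 <+: b.2 ∧ a.2 ≠ b.2 ∧
      ∀ u : ℕ → ℕ, (∀ i < b.1.length, u i = b.1.getD i 0) →
        b.2 ∈ secTree T x (g u) with hqdef
  haveI : IsIrrefl (List ℕ × List ℕ) q := ⟨fun a h => h.2.1 rfl⟩
  haveI : IsTrans (List ℕ × List ℕ) q := by
    constructor
    rintro a b c hab hbc
    refine ⟨hbc.1.trans hab.1, ?_, hbc.2.2.1.trans hab.2.2.1, ?_, hab.2.2.2.2⟩
    · have h1 : b.1.length < a.1.length := by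
        rcases lt_or_eq_of_le hab.1.length_le with h | h
        · exact h
        · exact absurd (hab.1.eq_of_length h) hab.2.1
      have h2 : c.1.length ≤ b.1.length := hbc.1.length_le
      intro h
      rw [← h] at h1
      omega
    · have h1 : b.2.length < a.2.length := by
        rcases lt_or_eq_of_le hab.2.2.1.length_le with h | h
        · exact h
        · exact absurd (hab.2.2.1.eq_of_length h) hab.2.2.2.1
      have h2 : c.2.length ≤ b.2.length := hbc.2.2.1.length_le
      intro h
      rw [← h] at h1
      omega
  haveI : IsStrictOrder (List ℕ × List ℕ) q := {}
  have hWFq : WellFounded q := by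
    rw [RelEmbedding.wellFounded_iff_isEmpty]
    constructor
    intro emb
    have hstep : ∀ n, q (emb (n + 1)) (emb n) := fun n => emb.map_rel_iff.2 (Nat.lt_succ_self n)
    set cσ : ℕ → List ℕ := fun n => (emb n).1 with hcσ
    set cs : ℕ → List ℕ := fun n => (emb n).2 with hcs
    have hchainσ : ∀ n, cσ n <+: cσ (n + 1) ∧ cσ n ≠ cσ (n + 1) := fun n =>
      ⟨(hstep n).1, (hstep n).2.1⟩
    set u : ℕ → ℕ := fun i => (cσ (i + 1)).getD i 0 with hu
    have hmem : ∀ n, cs (n + 1) ∈ secTree T x (g u) := by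
      intro n
      refine (hstep n).2.2.2.2 u ?_
      intro i hi
      show (cσ (i + 1)).getD i 0 = (cσ (n + 1)).getD i 0
      rw [List.getD_eq_getElem _ _ hi]
      exact chain_limit_entry cσ hchainσ (n + 1) i hi
    have hWFy : TreeWF (secTree T x (g u)) := by
      have hm : g u ∈ {y | TreeWF (secTree T x y)} := by
        rw [← hrange]
        exact Set.mem_range_self u
      exact hm
    have hdesc : ∀ n, branchRel (secTree T x (g u)) (cs (n + 2)) (cs (n + 1)) := fun n =>
      ⟨(hstep (n + 1)).2.2.1, fun h => (hstep (n + 1)).2.2.2.1 h.symm, hmem (n + 1)⟩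
    exact RelEmbedding.not_wellFounded
      (RelEmbedding.natGT (fun n => cs (n + 1)) hdesc) hWFy
  set α : Ordinal := ⨆ p : List ℕ × List ℕ, ((hWFq.apply p).rank + 1) with hα
  have hrankα : ∀ p, (hWFq.apply p).rank < α := by
    intro p
    have h1 : (hWFq.apply p).rank + 1 ≤ α := Ordinal.le_iSup _ p
    have h2 : (hWFq.apply p).rank < (hWFq.apply p).rank + 1 := by
      rw [Ordinal.add_one_eq_succ]
      exact Order.lt_succ _
    exact lt_of_lt_of_le h2 h1
  have hcard : α.card ≤ Cardinal.aleph0 := by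
    apply card_le_aleph0_of_lt_omega1
    apply Ordinal.iSup_lt_ord_lift
    · rw [Cardinal.isRegular_aleph_one.cof_eq, Cardinal.lift_id]
      exact lt_of_le_of_lt Cardinal.mk_le_aleph0 Cardinal.aleph0_lt_aleph_one
    · intro p
      rw [Ordinal.add_one_eq_succ]
      exact (Cardinal.isSuccLimit_ord (le_of_lt Cardinal.aleph0_lt_aleph_one)).succ_lt
        (rank_lt_omega1 hWFq p)
  refine ⟨α, hcard, ?_⟩
  intro y h
  obtain ⟨u, rfl⟩ : y ∈ Set.range g := by
    rw [hrange]
    exact h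
  -- modulus and its monotone majorant
  have hk : ∀ n, ∃ k : ℕ, ∀ u' : ℕ → ℕ, (∀ i < k, u' i = u i) → ∀ j < n, g u' j = g u j :=
    fun n => modulus hg u n
  choose k hkspec using hk
  set m' : ℕ → ℕ := fun n => Nat.rec (k 0) (fun n ih => max ih (k (n + 1)) + 1) n with hm'
  have hm'succ : ∀ n, m' (n + 1) = max (m' n) (k (n + 1)) + 1 := fun n => rfl
  have hm'mono : StrictMono m' := by
    apply strictMono_nat_of_lt_succ
    intro n
    rw [hm'succ n]
    exact Nat.lt_succ_of_le (le_max_left _ _)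
  have hm'k : ∀ n, k n ≤ m' n := by
    intro n
    cases n with
    | zero => exact le_rfl
    | succ n =>
      rw [hm'succ n]
      exact Nat.le_succ_of_le (le_max_right _ _)
  set U := secTree T x (g u) with hU
  set φ : List ℕ → List ℕ × List ℕ :=
    fun s => ((List.ofFn fun i : Fin (m' s.length) => u i), s) with hφ
  -- the edge property
  have hedge : ∀ a, (a ∈ U ∧ a ≠ []) → ∀ b, branchRel U b a →
      (b ∈ U ∧ b ≠ []) ∧ (hWFq.apply (φ b)).rank < (hWFq.apply (φ a)).rank := by
    intro a ha b hb
    have hblen : a.length < b.length := by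
      rcases lt_or_eq_of_le hb.1.length_le with h | h
      · exact h
      · exact absurd (hb.1.eq_of_length h).symm hb.2.1
    have hbne : b ≠ [] := by
      rintro rfl
      have := hb.1
      rw [List.prefix_nil.mp this] at ha
      exact ha.2 rfl
    refine ⟨⟨hb.2.2, hbne⟩, ?_⟩
    have hqba : q (φ b) (φ a) := by
      refine ⟨ofFn_prefix_ofFn u (le_of_lt (hm'mono hblen)), ?_, hb.1, fun h => hb.2.1 h.symm, ?_⟩
      · intro h
        have := congrArg List.length h
        simp only [hφ, List.length_ofFn] at this
        exact absurd this (Nat.ne_of_lt (hm'mono hblen))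
      · -- the continuity clause
        intro u' hu'
        simp only [hφ, List.length_ofFn] at hu'
        have hagree : ∀ i < k b.length, u' i = u i := by
          intro i hi
          have hi' : i < m' b.length := lt_of_lt_of_le hi (hm'k b.length)
          have := hu' i hi'
          rw [this, List.getD_eq_getElem _ _ (by simpa using hi'), List.getElem_ofFn]
        have hgg : ∀ j < b.length, g u' j = g u j := hkspec b.length u' hagree
        have : b ∈ secTree T x (g u') ↔ b ∈ secTree T x (g u) :=
          secTree_mem_congr (fun i hi => hgg i hi)
        exact this.2 hb.2.2
    have := Acc.rank_lt_of_rel (hWFq.apply (φ a)) hqba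
    calc (hWFq.apply (φ b)).rank = ((hWFq.apply (φ a)).inv hqba).rank := rank_proof_irrel _ _
      _ < (hWFq.apply (φ a)).rank := this
  have hmain := accRankLE_of_measure {s : List ℕ | s ∈ U ∧ s ≠ []}
    (fun s => (hWFq.apply (φ s)).rank) hedge
  have hfinal : TreeRankLE U α := by
    rw [treeRankLE_iff, accRankLE_iff]
    intro t ht
    refine ⟨(hWFq.apply (φ t)).rank, hrankα _, hmain t ⟨ht.2.2, ht.2.1⟩⟩
  obtain ⟨h', hle'⟩ := hfinal
  calc treeRank _ h = treeRank _ h' := rank_proof_irrel _ _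
    _ ≤ α := hle'

/-! ### Phase E1 : well-order codes, descending sequences -/

theorem exists_descending_of_not_wf {α : Type*} {r : α → α → Prop} (h : ¬ WellFounded r) :
    ∃ g : ℕ → α, ∀ n, r (g (n + 1)) (g n) := by
  classical
  have h1 : ∃ a, ¬ Acc r a := by
    by_contra hc
    push_neg at hc
    exact h ⟨fun a => hc a⟩
  have h2 : ∀ a, ¬ Acc r a → ∃ b, r b a ∧ ¬ Acc r b := by
    intro a ha
    by_contra hc
    push_neg at hc
    exact ha (Acc.intro a fun b hb => hc b hb)
  let F : {a // ¬ Acc r a} → {a // ¬ Acc r a} := fun p =>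
    ⟨(h2 p.1 p.2).choose, (h2 p.1 p.2).choose_spec.2⟩
  let g : ℕ → {a // ¬ Acc r a} := fun n => F^[n] ⟨h1.choose, h1.choose_spec⟩
  refine ⟨fun n => (g n).1, fun n => ?_⟩
  have hg : g (n + 1) = F (g n) := Function.iterate_succ_apply' F n _
  show r (g (n + 1)).1 (g n).1
  rw [hg]
  exact (h2 (g n).1 (g n).2).choose_spec.1

theorem not_wf_of_descending {α : Type*} {r : α → α → Prop} (g : ℕ → α)
    (hg : ∀ n, r (g (n + 1)) (g n)) : ¬ WellFounded r := by
  intro hwf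
  have key : ∀ a, Acc r a → ∀ n, g n ≠ a := by
    intro a ha
    induction ha with
    | intro b hb IH =>
      intro n hn
      refine IH (g (n + 1)) ?_ (n + 1) rfl
      rw [← hn]
      exact hg n
  exact key (g 0) (hwf.apply (g 0)) 0 rfl

theorem WOcode_iff (f : ℕ → ℕ) :
    WOcode f ↔ (∀ a b c, relOf f a b → relOf f b c → relOf f a c) ∧
      (∀ a b, relOf f a b ∨ a = b ∨ relOf f b a) ∧
      ¬ ∃ g : ℕ → ℕ, ∀ n, relOf f (g (n + 1)) (g n) := by
  constructor
  · intro wo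
    haveI : IsWellOrder ℕ (relOf f) := wo
    refine ⟨fun a b c hab hbc => IsTrans.trans a b c hab hbc, fun a b => trichotomous a b, ?_⟩
    rintro ⟨g, hg⟩
    exact not_wf_of_descending g hg (IsWellFounded.wf)
  · rintro ⟨ht, htri, hwf⟩
    haveI h1 : IsTrans ℕ (relOf f) := ⟨ht⟩
    haveI h2 : IsTrichotomous ℕ (relOf f) := ⟨fun a b hab hba => by
      rcases htri a b with h | h | h
      · exact absurd h hab
      · exact h
      · exact absurd h hba⟩
    haveI h3 : IsWellFounded ℕ (relOf f) := ⟨by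
      by_contra hc
      exact hwf (exists_descending_of_not_wf hc)⟩
    exact @IsWellOrder.mk ℕ (relOf f) h3 h2

/-! ### Phase E2 : clopen building blocks -/

theorem isOpen_triple_eq {W : Type*} [TopologicalSpace W] {e1 e2 e3 : W → ℕ}
    (h1 : Continuous e1) (h2 : Continuous e2) (h3 : Continuous e3) (c : ℕ × ℕ × ℕ) :
    IsOpen {w | (e1 w, e2 w, e3 w) = c} := by
  have he : {w | (e1 w, e2 w, e3 w) = c} =
      e1 ⁻¹' {c.1} ∩ (e2 ⁻¹' {c.2.1} ∩ e3 ⁻¹' {c.2.2}) := by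
    ext w
    simp only [mem_setOf_eq, Prod.ext_iff, mem_inter_iff, mem_preimage, mem_singleton_iff]
  rw [he]
  exact (((isOpen_discrete _).preimage h1).inter
    (((isOpen_discrete _).preimage h2).inter ((isOpen_discrete _).preimage h3)))

theorem isOpen_ofFn_eq {W : Type*} [TopologicalSpace W] {γ : Type*} (ℓ : W → ℕ) (E : ℕ → W → γ)
    (hℓ : Continuous ℓ) (hE : ∀ j, ∀ c : γ, IsOpen {w | E j w = c}) (l : List γ) :
    IsOpen {w | (List.ofFn fun i : Fin (ℓ w) => E (i : ℕ) w) = l} := by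
  have he : {w | (List.ofFn fun i : Fin (ℓ w) => E (i : ℕ) w) = l} =
      {w | ℓ w = l.length} ∩ ⋂ j : Fin l.length, {w | E (j : ℕ) w = l.get j} := by
    ext w
    simp only [mem_setOf_eq, mem_inter_iff, mem_iInter]
    constructor
    · rintro rfl
      refine ⟨by simp, fun j => ?_⟩
      simp [List.get_eq_getElem, List.getElem_ofFn]
    · rintro ⟨hlen, hj⟩
      apply List.ext_getElem
      · simpa using hlen
      · intro i hi1 hi2
        simp only [List.getElem_ofFn]
        have := hj ⟨i, hi2⟩
        simpa [List.get_eq_getElem] using this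
  rw [he]
  refine IsOpen.inter ?_ (isOpen_iInter_of_finite fun j => hE (j : ℕ) (l.get j))
  have : {w | ℓ w = l.length} = ℓ ⁻¹' {l.length} := rfl
  rw [this]
  exact (isOpen_discrete _).preimage hℓ

theorem isClopen_secMem {W : Type*} [TopologicalSpace W] (T : Set (List (ℕ × ℕ × ℕ)))
    {X Y : W → ℕ → ℕ} (hX : Continuous X) (hY : Continuous Y) (s : List ℕ) :
    IsClopen {w | s ∈ secTree T (X w) (Y w)} := by
  apply isClopen_mem_of_locallyConstant
    (L := fun w => List.ofFn fun i : Fin s.length => (X w i, Y w i, s.get i))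
  intro l
  have : {w | (List.ofFn fun i : Fin s.length => (X w (i : ℕ), Y w (i : ℕ), s.get i)) = l}
      = {w | (List.ofFn fun i : Fin ((fun _ => s.length) w) =>
          (fun (j : ℕ) w => (X w j, Y w j, s.getD j 0)) (i : ℕ) w) = l} := by
    apply congrArg
    ext w
    apply iff_of_eq
    apply congrArg (fun t => t = l)
    apply congrArg
    funext i
    simp [List.getD_eq_getElem _ _ i.2, List.get_eq_getElem]
  rw [this]
  exact isOpen_ofFn_eq (fun _ => s.length) (fun j w => (X w j, Y w j, s.getD j 0))
    continuous_const (fun j c => isOpen_triple_eq ((continuous_apply j).comp hX)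
      ((continuous_apply j).comp hY) continuous_const c) l

theorem ofFn_mem_secTree_iff (T : Set (List (ℕ × ℕ × ℕ))) (x y u : ℕ → ℕ) (n : ℕ) :
    (List.ofFn fun i : Fin n => u i) ∈ secTree T x y ↔
      (List.ofFn fun i : Fin n => (x (i : ℕ), y (i : ℕ), u (i : ℕ))) ∈ T := by
  unfold secTree
  rw [mem_setOf_eq]
  have he : (List.ofFn fun i : Fin (List.ofFn fun j : Fin n => u j).length =>
      (x (i : ℕ), y (i : ℕ), (List.ofFn fun j : Fin n => u j).get i)) =
      List.ofFn fun i : Fin n => (x (i : ℕ), y (i : ℕ), u (i : ℕ)) := by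
    apply List.ext_getElem
    · simp
    · intro i hi1 hi2
      simp [List.getElem_ofFn, List.get_eq_getElem]
  rw [he]

/-! ### Phase E3 : the analytic sets -/

theorem meas_rel_snd (a b : ℕ) :
    MeasurableSet {p : (ℕ → ℕ) × (ℕ → ℕ) | relOf p.2 a b} := by
  have he : {p : (ℕ → ℕ) × (ℕ → ℕ) | relOf p.2 a b} =
      (fun p : (ℕ → ℕ) × (ℕ → ℕ) => p.2 (Nat.pair a b)) ⁻¹' {1} := rfl
  rw [he]
  exact ((measurable_pi_apply (Nat.pair a b)).comp measurable_snd) (measurableSet_singleton 1)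

theorem cont_relOf_eval {W : Type*} [TopologicalSpace W] {F : W → ℕ → ℕ} {a b : W → ℕ}
    (hF : Continuous F) (ha : Continuous a) (hb : Continuous b) :
    Continuous fun w => F w (Nat.pair (a w) (b w)) := by
  have h2 : Continuous fun w => Nat.pair (a w) (b w) :=
    (continuous_of_discreteTopology (f := fun mn : ℕ × ℕ => Nat.pair mn.1 mn.2)).comp
      (ha.prodMk hb)
  exact continuous_eval2.comp (hF.prodMk h2)

theorem isOpen_pair_eq {W : Type*} [TopologicalSpace W] {a b : W → ℕ}
    (ha : Continuous a) (hb : Continuous b) (c : ℕ × ℕ) :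
    IsOpen {w | (a w, b w) = c} := by
  have he : {w | (a w, b w) = c} = a ⁻¹' {c.1} ∩ b ⁻¹' {c.2} := by
    ext w
    simp only [mem_setOf_eq, Prod.ext_iff, mem_inter_iff, mem_preimage, mem_singleton_iff]
  rw [he]
  exact ((isOpen_discrete _).preimage ha).inter ((isOpen_discrete _).preimage hb)

theorem isClopen_lt {W : Type*} [TopologicalSpace W] {a b : W → ℕ}
    (ha : Continuous a) (hb : Continuous b) : IsClopen {w | a w < b w} := by
  exact isClopen_mem_of_locallyConstant (fun w => (a w, b w))
    (fun c => isOpen_pair_eq ha hb c) {mn : ℕ × ℕ | mn.1 < mn.2}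

theorem analytic_not_WOcode :
    AnalyticSet {p : (ℕ → ℕ) × (ℕ → ℕ) | ¬ WOcode p.2} := by
  have hset : {p : (ℕ → ℕ) × (ℕ → ℕ) | ¬ WOcode p.2} =
      ({p : (ℕ → ℕ) × (ℕ → ℕ) | ∃ a b c, relOf p.2 a b ∧ relOf p.2 b c ∧ ¬ relOf p.2 a c} ∪
       {p : (ℕ → ℕ) × (ℕ → ℕ) | ∃ a b : ℕ, ¬ relOf p.2 a b ∧ a ≠ b ∧ ¬ relOf p.2 b a}) ∪
      Prod.fst '' {w : ((ℕ → ℕ) × (ℕ → ℕ)) × (ℕ → ℕ) |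
        ∀ n, relOf w.1.2 (w.2 (n + 1)) (w.2 n)} := by
    ext p
    simp only [mem_setOf_eq, mem_union, mem_image, WOcode_iff]
    constructor
    · intro h
      by_cases h1 : ∀ a b c, relOf p.2 a b → relOf p.2 b c → relOf p.2 a c
      · by_cases h2 : ∀ a b : ℕ, relOf p.2 a b ∨ a = b ∨ relOf p.2 b a
        · have h3 : ∃ g : ℕ → ℕ, ∀ n, relOf p.2 (g (n + 1)) (g n) := by
            by_contra hc
            exact h ⟨h1, h2, hc⟩
          obtain ⟨g, hg⟩ := h3
          exact Or.inr ⟨(p, g), hg, rfl⟩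
        · push_neg at h2
          obtain ⟨a, b, hab, hne, hba⟩ := h2
          exact Or.inl (Or.inr ⟨a, b, hab, hne, hba⟩)
      · push_neg at h1
        obtain ⟨a, b, c, hab, hbc, hac⟩ := h1
        exact Or.inl (Or.inl ⟨a, b, c, hab, hbc, hac⟩)
    · rintro ((⟨a, b, c, hab, hbc, hac⟩ | ⟨a, b, hab, hne, hba⟩) | ⟨⟨q, g⟩, hg, rfl⟩)
      · rintro ⟨h1, -, -⟩
        exact hac (h1 a b c hab hbc)
      · rintro ⟨-, h2, -⟩
        rcases h2 a b with h | h | h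
        · exact hab h
        · exact hne h
        · exact hba h
      · rintro ⟨-, -, h3⟩
        exact h3 ⟨g, hg⟩
  rw [hset]
  apply AnalyticSet.union'
  · apply AnalyticSet.union'
    · apply MeasurableSet.analyticSet
      have he : {p : (ℕ → ℕ) × (ℕ → ℕ) | ∃ a b c, relOf p.2 a b ∧ relOf p.2 b c ∧
          ¬ relOf p.2 a c} = ⋃ (a : ℕ) (b : ℕ) (c : ℕ),
          ({p : (ℕ → ℕ) × (ℕ → ℕ) | relOf p.2 a b} ∩
            ({p : (ℕ → ℕ) × (ℕ → ℕ) | relOf p.2 b c} ∩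
             {p : (ℕ → ℕ) × (ℕ → ℕ) | relOf p.2 a c}ᶜ)) := by
        ext p
        simp only [mem_setOf_eq, mem_iUnion, mem_inter_iff, mem_compl_iff]
      rw [he]
      refine MeasurableSet.iUnion fun a => MeasurableSet.iUnion fun b =>
        MeasurableSet.iUnion fun c => ?_
      exact (meas_rel_snd a b).inter ((meas_rel_snd b c).inter (meas_rel_snd a c).compl)
    · apply MeasurableSet.analyticSet
      have he : {p : (ℕ → ℕ) × (ℕ → ℕ) | ∃ a b : ℕ, ¬ relOf p.2 a b ∧ a ≠ b ∧ ¬ relOf p.2 b a}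
          = ⋃ (a : ℕ) (b : ℕ) (_ : a ≠ b),
          ({p : (ℕ → ℕ) × (ℕ → ℕ) | relOf p.2 a b}ᶜ ∩
           {p : (ℕ → ℕ) × (ℕ → ℕ) | relOf p.2 b a}ᶜ) := by
        ext p
        simp only [mem_setOf_eq, mem_iUnion, mem_inter_iff, mem_compl_iff]
        constructor
        · rintro ⟨a, b, h1, h2, h3⟩
          exact ⟨a, b, h2, h1, h3⟩
        · rintro ⟨a, b, h2, h1, h3⟩
          exact ⟨a, b, h1, h2, h3⟩
      rw [he]
      refine MeasurableSet.iUnion fun a => MeasurableSet.iUnion fun b =>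
        MeasurableSet.iUnion fun _ => ?_
      exact (meas_rel_snd a b).compl.inter (meas_rel_snd b a).compl
  · apply proj_closed_analytic
    have he : {w : ((ℕ → ℕ) × (ℕ → ℕ)) × (ℕ → ℕ) | ∀ n, relOf w.1.2 (w.2 (n + 1)) (w.2 n)} =
        ⋂ n : ℕ, {w : ((ℕ → ℕ) × (ℕ → ℕ)) × (ℕ → ℕ) |
          w.1.2 (Nat.pair (w.2 (n + 1)) (w.2 n)) = 1} := by
      ext w
      simp only [mem_setOf_eq, mem_iInter]
      rfl
    rw [he]
    refine isClosed_iInter fun n => ?_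
    exact isClosed_eq (cont_relOf_eval (continuous_snd.comp continuous_fst)
      ((continuous_apply (n + 1)).comp continuous_snd)
      ((continuous_apply n).comp continuous_snd)) continuous_const

theorem analytic_not_treeWF (T : Set (List (ℕ × ℕ × ℕ))) :
    AnalyticSet {q : ((ℕ → ℕ) × (ℕ → ℕ)) × (ℕ → ℕ) | ¬ TreeWF (secTree T q.1.1 q.2)} := by
  have hset : {q : ((ℕ → ℕ) × (ℕ → ℕ)) × (ℕ → ℕ) | ¬ TreeWF (secTree T q.1.1 q.2)} =
      Prod.fst '' {w : (((ℕ → ℕ) × (ℕ → ℕ)) × (ℕ → ℕ)) × (ℕ → ℕ) |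
        (∀ n, w.2 (2 * n + 1) < w.2 (2 * (n + 1) + 1)) ∧
        ∀ n, (List.ofFn fun i : Fin (w.2 (2 * n + 1)) =>
          (w.1.1.1 (i : ℕ), w.1.2 (i : ℕ), w.2 (2 * (i : ℕ)))) ∈ T} := by
    ext q
    simp only [mem_setOf_eq, mem_image]
    rw [not_treeWF_iff_branchCode]
    constructor
    · rintro ⟨v, hv1, hv2⟩
      refine ⟨(q, v), ⟨hv1, fun n => ?_⟩, rfl⟩
      exact (ofFn_mem_secTree_iff T q.1.1 q.2 (fun m => v (2 * m)) (v (2 * n + 1))).1 (hv2 n)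
    · rintro ⟨⟨q', v⟩, ⟨hv1, hv2⟩, rfl⟩
      refine ⟨v, hv1, fun n => ?_⟩
      exact (ofFn_mem_secTree_iff T q'.1.1 q'.2 (fun m => v (2 * m)) (v (2 * n + 1))).2 (hv2 n)
  rw [hset]
  apply proj_closed_analytic
  have he : {w : (((ℕ → ℕ) × (ℕ → ℕ)) × (ℕ → ℕ)) × (ℕ → ℕ) |
      (∀ n, w.2 (2 * n + 1) < w.2 (2 * (n + 1) + 1)) ∧
      ∀ n, (List.ofFn fun i : Fin (w.2 (2 * n + 1)) =>
        (w.1.1.1 (i : ℕ), w.1.2 (i : ℕ), w.2 (2 * (i : ℕ)))) ∈ T} =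
      (⋂ n : ℕ, {w : (((ℕ → ℕ) × (ℕ → ℕ)) × (ℕ → ℕ)) × (ℕ → ℕ) |
        w.2 (2 * n + 1) < w.2 (2 * (n + 1) + 1)}) ∩
      (⋂ n : ℕ, {w : (((ℕ → ℕ) × (ℕ → ℕ)) × (ℕ → ℕ)) × (ℕ → ℕ) |
        (List.ofFn fun i : Fin (w.2 (2 * n + 1)) =>
          (w.1.1.1 (i : ℕ), w.1.2 (i : ℕ), w.2 (2 * (i : ℕ)))) ∈ T}) := by
    ext w
    simp only [mem_setOf_eq, mem_inter_iff, mem_iInter]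
  rw [he]
  apply IsClosed.inter
  · refine isClosed_iInter fun n => ?_
    exact (isClopen_lt ((continuous_apply (2 * n + 1)).comp continuous_snd)
      ((continuous_apply (2 * (n + 1) + 1)).comp continuous_snd)).isClosed
  · refine isClosed_iInter fun n => ?_
    refine (isClopen_mem_of_locallyConstant
      (fun w : (((ℕ → ℕ) × (ℕ → ℕ)) × (ℕ → ℕ)) × (ℕ → ℕ) =>
        List.ofFn fun i : Fin (w.2 (2 * n + 1)) =>
          (w.1.1.1 (i : ℕ), w.1.2 (i : ℕ), w.2 (2 * (i : ℕ)))) ?_ T).isClosed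
    intro l
    exact isOpen_ofFn_eq
      (fun w : (((ℕ → ℕ) × (ℕ → ℕ)) × (ℕ → ℕ)) × (ℕ → ℕ) => w.2 (2 * n + 1))
      (fun (j : ℕ) (w : (((ℕ → ℕ) × (ℕ → ℕ)) × (ℕ → ℕ)) × (ℕ → ℕ)) =>
        (w.1.1.1 j, w.1.2 j, w.2 (2 * j)))
      ((continuous_apply (2 * n + 1)).comp continuous_snd)
      (fun j c => isOpen_triple_eq
        ((continuous_apply j).comp (continuous_fst.comp (continuous_fst.comp continuous_fst)))
        ((continuous_apply j).comp (continuous_snd.comp continuous_fst))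
        ((continuous_apply (2 * j)).comp continuous_snd) c) l

theorem analytic_exists_rho (T : Set (List (ℕ × ℕ × ℕ))) :
    AnalyticSet {q : ((ℕ → ℕ) × (ℕ → ℕ)) × (ℕ → ℕ) | ∃ ρ : ℕ → ℕ,
      ∀ s t : List ℕ, branchRel (secTree T q.1.1 q.2) s t → t ∈ secTree T q.1.1 q.2 →
        t ≠ [] → relOf q.1.2 (ρ (Encodable.encode s)) (ρ (Encodable.encode t))} := by
  classical
  have hset : {q : ((ℕ → ℕ) × (ℕ → ℕ)) × (ℕ → ℕ) | ∃ ρ : ℕ → ℕ,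
      ∀ s t : List ℕ, branchRel (secTree T q.1.1 q.2) s t → t ∈ secTree T q.1.1 q.2 →
        t ≠ [] → relOf q.1.2 (ρ (Encodable.encode s)) (ρ (Encodable.encode t))} =
      Prod.fst '' {w : (((ℕ → ℕ) × (ℕ → ℕ)) × (ℕ → ℕ)) × (ℕ → ℕ) |
        ∀ s t : List ℕ, (t <+: s ∧ s ≠ t ∧ s ∈ secTree T w.1.1.1 w.1.2 ∧
          t ∈ secTree T w.1.1.1 w.1.2 ∧ t ≠ []) →
          w.1.1.2 (Nat.pair (w.2 (Encodable.encode s)) (w.2 (Encodable.encode t))) = 1} := by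
    ext q
    simp only [mem_setOf_eq, mem_image]
    constructor
    · rintro ⟨ρ, hρ⟩
      refine ⟨(q, ρ), fun s t ht => ?_, rfl⟩
      exact hρ s t ⟨ht.1, ht.2.1, ht.2.2.1⟩ ht.2.2.2.1 ht.2.2.2.2
    · rintro ⟨⟨q', ρ⟩, hρ, rfl⟩
      refine ⟨ρ, fun s t hb htU htne => ?_⟩
      exact hρ s t ⟨hb.1, hb.2.1, hb.2.2, htU, htne⟩
  rw [hset]
  apply proj_closed_analytic
  have he : {w : (((ℕ → ℕ) × (ℕ → ℕ)) × (ℕ → ℕ)) × (ℕ → ℕ) |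
      ∀ s t : List ℕ, (t <+: s ∧ s ≠ t ∧ s ∈ secTree T w.1.1.1 w.1.2 ∧
        t ∈ secTree T w.1.1.1 w.1.2 ∧ t ≠ []) →
        w.1.1.2 (Nat.pair (w.2 (Encodable.encode s)) (w.2 (Encodable.encode t))) = 1} =
      ⋂ st : List ℕ × List ℕ, {w : (((ℕ → ℕ) × (ℕ → ℕ)) × (ℕ → ℕ)) × (ℕ → ℕ) |
        (st.2 <+: st.1 ∧ st.1 ≠ st.2 ∧ st.1 ∈ secTree T w.1.1.1 w.1.2 ∧
          st.2 ∈ secTree T w.1.1.1 w.1.2 ∧ st.2 ≠ []) →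
          w.1.1.2 (Nat.pair (w.2 (Encodable.encode st.1)) (w.2 (Encodable.encode st.2))) = 1} := by
    ext w
    simp only [mem_setOf_eq, mem_iInter]
    exact ⟨fun h st => h st.1 st.2, fun h s t => h (s, t)⟩
  rw [he]
  refine isClosed_iInter fun st => ?_
  obtain ⟨s, t⟩ := st
  by_cases hc : t <+: s ∧ s ≠ t ∧ t ≠ []
  · have he2 : {w : (((ℕ → ℕ) × (ℕ → ℕ)) × (ℕ → ℕ)) × (ℕ → ℕ) |
        (t <+: s ∧ s ≠ t ∧ s ∈ secTree T w.1.1.1 w.1.2 ∧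
          t ∈ secTree T w.1.1.1 w.1.2 ∧ t ≠ []) →
          w.1.1.2 (Nat.pair (w.2 (Encodable.encode s)) (w.2 (Encodable.encode t))) = 1} =
        ({w : (((ℕ → ℕ) × (ℕ → ℕ)) × (ℕ → ℕ)) × (ℕ → ℕ) | s ∈ secTree T w.1.1.1 w.1.2} ∩
         {w : (((ℕ → ℕ) × (ℕ → ℕ)) × (ℕ → ℕ)) × (ℕ → ℕ) | t ∈ secTree T w.1.1.1 w.1.2})ᶜ ∪
        {w : (((ℕ → ℕ) × (ℕ → ℕ)) × (ℕ → ℕ)) × (ℕ → ℕ) |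
          w.1.1.2 (Nat.pair (w.2 (Encodable.encode s)) (w.2 (Encodable.encode t))) = 1} := by
      ext w
      simp only [mem_setOf_eq, mem_union, mem_compl_iff, mem_inter_iff]
      constructor
      · intro h
        by_cases hm : s ∈ secTree T w.1.1.1 w.1.2 ∧ t ∈ secTree T w.1.1.1 w.1.2
        · exact Or.inr (h ⟨hc.1, hc.2.1, hm.1, hm.2, hc.2.2⟩)
        · exact Or.inl hm
      · rintro (h | h)
        · intro hh
          exact absurd ⟨hh.2.2.1, hh.2.2.2.1⟩ h
        · intro _
          exact h
    rw [he2]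
    have hXc : Continuous fun w : (((ℕ → ℕ) × (ℕ → ℕ)) × (ℕ → ℕ)) × (ℕ → ℕ) => w.1.1.1 :=
      continuous_fst.comp (continuous_fst.comp continuous_fst)
    have hYc : Continuous fun w : (((ℕ → ℕ) × (ℕ → ℕ)) × (ℕ → ℕ)) × (ℕ → ℕ) => w.1.2 :=
      continuous_snd.comp continuous_fst
    refine IsClosed.union ?_ ?_
    · rw [isClosed_compl_iff]
      exact ((isClopen_secMem T hXc hYc s).isOpen).inter ((isClopen_secMem T hXc hYc t).isOpen)
    · exact isClosed_eq (cont_relOf_eval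
        (continuous_snd.comp (continuous_fst.comp continuous_fst))
        ((continuous_apply (Encodable.encode s)).comp continuous_snd)
        ((continuous_apply (Encodable.encode t)).comp continuous_snd)) continuous_const
  · have he2 : {w : (((ℕ → ℕ) × (ℕ → ℕ)) × (ℕ → ℕ)) × (ℕ → ℕ) |
        (t <+: s ∧ s ≠ t ∧ s ∈ secTree T w.1.1.1 w.1.2 ∧
          t ∈ secTree T w.1.1.1 w.1.2 ∧ t ≠ []) →
          w.1.1.2 (Nat.pair (w.2 (Encodable.encode s)) (w.2 (Encodable.encode t))) = 1} =
        univ := by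
      ext w
      simp only [mem_setOf_eq, mem_univ, iff_true]
      intro hh
      exact absurd ⟨hh.1, hh.2.1, hh.2.2.2.2⟩ hc
    rw [he2]
    exact isClosed_univ

/-! ### Phase F : assembly -/

theorem measurable_Aapprox_section (T : Set (List (ℕ × ℕ × ℕ))) (x : ℕ → ℕ) {α : Ordinal}
    (hα : α.card ≤ Cardinal.aleph0) :
    MeasurableSet {y : ℕ → ℕ | (x, y) ∈ Aapprox T α} := by
  have hs : {y : ℕ → ℕ | (x, y) ∈ Aapprox T α} =
      {y | accRankLE (branchRel (secTree T x y)) [] α}ᶜ := by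
    ext y
    simp only [Aapprox, mem_setOf_eq, mem_compl_iff]
    rw [treeRankLE_iff]
  rw [hs]
  exact (measurable_accRankLE T x α hα []).compl

theorem rho_bridge (f : ℕ → ℕ) (U : Set (List ℕ)) :
    (∃ ρ : ℕ → ℕ, ∀ s t : List ℕ, branchRel U s t → t ∈ U → t ≠ [] →
        relOf f (ρ (Encodable.encode s)) (ρ (Encodable.encode t))) ↔
      (∃ ρ : List ℕ → ℕ, ∀ s t, branchRel U s t → t ∈ U → t ≠ [] → relOf f (ρ s) (ρ t)) := by
  constructor
  · rintro ⟨ρ, hρ⟩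
    exact ⟨fun s => ρ (Encodable.encode s), hρ⟩
  · rintro ⟨ρ, hρ⟩
    refine ⟨fun n => ρ (Denumerable.ofNat (List ℕ) n), fun s t hb htU htne => ?_⟩
    simpa [Denumerable.ofNat_encode] using hρ s t hb htU htne

theorem isPi12_DeltaSet (A : Set ((ℕ → ℕ) × (ℕ → ℕ))) (T : Set (List (ℕ × ℕ × ℕ)))
    (hrep : ∀ p : (ℕ → ℕ) × (ℕ → ℕ), p ∈ A ↔ ¬ TreeWF (secTree T p.1 p.2)) :
    IsPi12 (DeltaSet A T) := by
  classical
  obtain ⟨F1, hF1closed, hF1eq⟩ := analytic_eq_proj_closed analytic_not_WOcode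
  set G1 : Set (((ℕ → ℕ) × (ℕ → ℕ)) × (ℕ → ℕ)) :=
    {q | ¬ TreeWF (secTree T q.1.1 q.2)} with hG1
  set G2 : Set (((ℕ → ℕ) × (ℕ → ℕ)) × (ℕ → ℕ)) :=
    {q | ∃ ρ : ℕ → ℕ, ∀ s t : List ℕ, branchRel (secTree T q.1.1 q.2) s t →
      t ∈ secTree T q.1.1 q.2 → t ≠ [] →
      relOf q.1.2 (ρ (Encodable.encode s)) (ρ (Encodable.encode t))} with hG2
  refine ⟨F1 ∪ (G1 ∪ G2)ᶜ, ?_, ?_⟩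
  · show AnalyticSet (F1 ∪ (G1 ∪ G2)ᶜ)ᶜ
    rw [compl_union, compl_compl]
    exact AnalyticSet.inter'
      ((hF1closed.isOpen_compl.measurableSet).analyticSet)
      (AnalyticSet.union' (analytic_not_treeWF T) (analytic_exists_rho T))
  · rw [image_union, ← hF1eq]
    ext p
    simp only [mem_union, mem_compl_iff, mem_image, mem_setOf_eq, DeltaSet]
    constructor
    · intro h
      by_cases hwo : WOcode p.2
      · right
        have hne : {y | (p.1, y) ∈ A} ≠ {y | (p.1, y) ∈ Aapprox T (otf p.2)} := by
          intro hh
          exact h ⟨hwo, hh⟩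
        have hex : ∃ y, ¬(((p.1, y) ∈ A) ↔ ((p.1, y) ∈ Aapprox T (otf p.2))) := by
          by_contra hc
          push_neg at hc
          exact hne (Set.ext fun y => hc y)
        obtain ⟨y, hy⟩ := hex
        rw [hrep (p.1, y)] at hy
        have hWF : TreeWF (secTree T p.1 y) := by
          by_contra hWF
          exact hy (iff_of_true hWF (fun hR => hWF (treeRankLE_treeWF hR)))
        have hnR : ¬ TreeRankLE (secTree T p.1 y) (otf p.2) := by
          intro hR
          exact hy (iff_of_false (not_not_intro hWF) (not_not_intro hR))
        refine ⟨(p, y), ?_, rfl⟩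
        intro hq
        rcases hq with hq | hq
        · exact hq hWF
        · exact hnR ((treeRankLE_otf_iff hwo _).2 ((rho_bridge _ _).1 hq))
      · exact Or.inl hwo
    · rintro (h | ⟨q, hq, rfl⟩)
      · intro hh
        exact h hh.1
      · intro hh
        have hq1 : q ∉ G1 ∪ G2 := hq
        have hWF : TreeWF (secTree T q.1.1 q.2) := by
          by_contra hWF
          exact hq1 (Or.inl hWF)
        have hnρ : q ∉ G2 := fun hx => hq1 (Or.inr hx)
        have hnR : ¬ TreeRankLE (secTree T q.1.1 q.2) (otf q.1.2) := by
          intro hR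
          exact hnρ ((rho_bridge _ _).2 ((treeRankLE_otf_iff hh.1 _).1 hR))
        have hyA : q.2 ∈ {y | (q.1.1, y) ∈ A} := by
          rw [hh.2]
          exact hnR
        exact (hrep (q.1.1, q.2)).1 hyA hWF

theorem sections_eq_proj_DeltaSet (A : Set ((ℕ → ℕ) × (ℕ → ℕ))) (T : Set (List (ℕ × ℕ × ℕ)))
    (hrep : ∀ p : (ℕ → ℕ) × (ℕ → ℕ), p ∈ A ↔ ¬ TreeWF (secTree T p.1 p.2)) :
    {x : ℕ → ℕ | MeasurableSet {y | (x, y) ∈ A}} = Prod.fst '' (DeltaSet A T) := by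
  ext x
  simp only [mem_setOf_eq, mem_image]
  constructor
  · intro hx
    have hDmeas : MeasurableSet {y : ℕ → ℕ | TreeWF (secTree T x y)} := by
      have he : {y : ℕ → ℕ | TreeWF (secTree T x y)} = {y : ℕ → ℕ | (x, y) ∈ A}ᶜ := by
        ext y
        simp only [mem_setOf_eq, mem_compl_iff]
        rw [hrep (x, y)]
        exact not_not.symm
      rw [he]
      exact hx.compl
    obtain ⟨α, hαcard, hbound⟩ := bounded_rank T x hDmeas.analyticSet
    obtain ⟨f, hwo, hle⟩ := exists_WOcode_ge hαcard
    refine ⟨(x, f), ⟨hwo, ?_⟩, rfl⟩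
    ext y
    simp only [mem_setOf_eq]
    rw [hrep (x, y)]
    constructor
    · intro h hR
      exact h (treeRankLE_treeWF hR)
    · intro hR hWF
      exact hR ⟨hWF, le_trans (hbound y hWF) hle⟩
  · rintro ⟨⟨x', f⟩, ⟨hwo, heq⟩, rfl⟩
    have hcard : (otf f).card ≤ Cardinal.aleph0 := by
      rw [otf_eq hwo]
      haveI := hwo
      exact le_of_eq ((@Ordinal.card_type ℕ (relOf f) hwo).trans Cardinal.mk_nat)
    have hm := measurable_Aapprox_section T x' hcard
    rw [show {y | ((x', f).1, y) ∈ A} = {y : ℕ → ℕ | (x', y) ∈ Aapprox T (otf f)} from heq]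
    exact hm

end DST5

/-- `Δ = {(x,f) : f ∈ WO, δ(x) ≤ ot(f)}` is Π¹₂, and
`{x : A_x is Borel}` is Σ¹₃. -/
theorem deltaSet_pi12_and_borelSections_sigma13
    (A : Set ((ℕ → ℕ) × (ℕ → ℕ))) (T : Set (List (ℕ × ℕ × ℕ)))
    (hA : AnalyticSet A)
    (hrep : ∀ p : (ℕ → ℕ) × (ℕ → ℕ), p ∈ A ↔ ¬ TreeWF (secTree T p.1 p.2)) :
    IsPi12 (DeltaSet A T) ∧
      IsSigma13 {x : ℕ → ℕ | MeasurableSet {y | (x, y) ∈ A}} := by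
  refine ⟨DST5.isPi12_DeltaSet A T hrep, ?_⟩
  exact ⟨DeltaSet A T, DST5.isPi12_DeltaSet A T hrep,
    DST5.sections_eq_proj_DeltaSet A T hrep⟩
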